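/- Let θ : A → B be a surjective coalgebra map between pointed irreducible coalgebras over a field, both graded with A generated as an algebra in degree 1 (A a Nichols-type graded braided Hopf algebra), and suppose θ maps the coradical filtration of A onto the coradical filtration of B. If the space of primitive elements of A equals its degree-1 component A(1), then the space of primitive elements of B equals B(1); consequently B is generated in degree 1. -/

import Mathlib

open TensorProduct

/-- A submodule `S` of a coalgebra `C` is a subcoalgebra if `Δ(S) ⊆ S ⊗ S`. -/
def IsSubcoalgebra (k : Type*) {C : Type*} [CommRing k] [AddCommGroup C] [Module k C]
    [Coalgebra k C] (S : Submodule k C) : Prop :=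
  ∀ x ∈ S, Coalgebra.comul (R := k) x ∈
    LinearMap.range (TensorProduct.map S.subtype S.subtype)

/-- A simple subcoalgebra. -/
def IsSimpleSubcoalgebra (k : Type*) {C : Type*} [CommRing k] [AddCommGroup C]
    [Module k C] [Coalgebra k C] (S : Submodule k C) : Prop :=
  S ≠ ⊥ ∧ IsSubcoalgebra k S ∧
    ∀ T : Submodule k C, T ≤ S → IsSubcoalgebra k T → T = ⊥ ∨ T = S

/-- The coradical: the sum of all simple subcoalgebras. -/
noncomputable def coradical (k C : Type*) [CommRing k] [AddCommGroup C] [Module k C]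
    [Coalgebra k C] : Submodule k C :=
  sSup {S | IsSimpleSubcoalgebra k S}

/-- The coradical filtration: `C₀ = coradical`, `C_{n+1} = Δ⁻¹(C₀ ⊗ C + C ⊗ C_n)`. -/
noncomputable def coradFilt (k C : Type*) [CommRing k] [AddCommGroup C] [Module k C]
    [Coalgebra k C] : ℕ → Submodule k C
  | 0 => coradical k C
  | n + 1 => Submodule.comap (Coalgebra.comul (R := k))
      (LinearMap.range (TensorProduct.map (coradical k C).subtype (LinearMap.id : C →ₗ[k] C)) ⊔
        LinearMap.range (TensorProduct.map (LinearMap.id : C →ₗ[k] C) (coradFilt k C n).subtype))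

/-- The space of primitive elements `{x : Δ x = x ⊗ 1 + 1 ⊗ x}`. -/
noncomputable def primitives (k C : Type*) [CommRing k] [Ring C] [Module k C]
    [Coalgebra k C] : Submodule k C :=
  LinearMap.ker (Coalgebra.comul (R := k)
    - ((TensorProduct.mk k C C).flip 1 + TensorProduct.mk k C C 1))

section Aux

variable {k C : Type*} [CommRing k]

lemma mem_primitives_iff [Ring C] [Module k C] [Coalgebra k C] (x : C) :
    x ∈ primitives k C ↔
      Coalgebra.comul (R := k) x = x ⊗ₜ[k] (1 : C) + (1 : C) ⊗ₜ[k] x := by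
  rw [primitives, LinearMap.mem_ker, LinearMap.sub_apply, LinearMap.add_apply, sub_eq_zero]
  rfl

lemma tensor_span_one_left [Ring C] [Module k C] (S : Submodule k C)
    (hS : S = Submodule.span k {(1 : C)}) (t : S ⊗[k] C) :
    ∃ u : C, TensorProduct.map S.subtype (LinearMap.id : C →ₗ[k] C) t = (1 : C) ⊗ₜ[k] u := by
  induction t with
  | zero => exact ⟨0, by simp⟩
  | tmul s c =>
      obtain ⟨r, hr⟩ := Submodule.mem_span_singleton.mp (hS.le s.2)
      refine ⟨r • c, ?_⟩
      rw [TensorProduct.map_tmul]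
      show (s : C) ⊗ₜ[k] c = _
      rw [← hr, TensorProduct.smul_tmul]
  | add x y hx hy =>
      obtain ⟨u, hu⟩ := hx; obtain ⟨v, hv⟩ := hy
      exact ⟨u + v, by rw [map_add, hu, hv, TensorProduct.tmul_add]⟩

lemma tensor_span_one_right [Ring C] [Module k C] (S : Submodule k C)
    (hS : S = Submodule.span k {(1 : C)}) (t : C ⊗[k] S) :
    ∃ u : C, TensorProduct.map (LinearMap.id : C →ₗ[k] C) S.subtype t = u ⊗ₜ[k] (1 : C) := by
  induction t with
  | zero => exact ⟨0, by simp⟩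
  | tmul c s =>
      obtain ⟨r, hr⟩ := Submodule.mem_span_singleton.mp (hS.le s.2)
      refine ⟨r • c, ?_⟩
      rw [TensorProduct.map_tmul]
      show c ⊗ₜ[k] (s : C) = _
      rw [← hr, ← TensorProduct.smul_tmul]
  | add x y hx hy =>
      obtain ⟨u, hu⟩ := hx; obtain ⟨v, hv⟩ := hy
      exact ⟨u + v, by rw [map_add, hu, hv, TensorProduct.add_tmul]⟩

/-- In a bialgebra, an element of `coradFilt 1` becomes primitive after subtracting its
counit part, provided the coradical is spanned by `1`. -/
lemma coradFilt_one_sub_counit_primitive {C : Type*} [Ring C] [Bialgebra k C]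
    (hpt : coradical k C = Submodule.span k {(1 : C)}) {a : C} (ha : a ∈ coradFilt k C 1) :
    a - Coalgebra.counit (R := k) a • (1 : C) ∈ primitives k C := by
  have ha' : Coalgebra.comul (R := k) a ∈
      LinearMap.range (TensorProduct.map (coradical k C).subtype (LinearMap.id : C →ₗ[k] C)) ⊔
        LinearMap.range (TensorProduct.map (LinearMap.id : C →ₗ[k] C)
          (coradFilt k C 0).subtype) := ha
  obtain ⟨y, hy, z, hz, hyz⟩ := Submodule.mem_sup.mp ha'
  obtain ⟨ty, rfl⟩ := hy
  obtain ⟨tz, rfl⟩ := hz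
  obtain ⟨u, hu⟩ := tensor_span_one_left (coradical k C) hpt ty
  obtain ⟨v, hv⟩ := tensor_span_one_right (coradFilt k C 0) hpt tz
  rw [hu, hv] at hyz
  -- hyz : 1 ⊗ u + v ⊗ 1 = comul a
  set α := Coalgebra.counit (R := k) u with hα
  set β := Coalgebra.counit (R := k) v with hβ
  have h1 : u + β • (1 : C) = a := by
    have h := Coalgebra.rTensor_counit_comul (R := k) a
    rw [← hyz, map_add, LinearMap.rTensor_tmul, LinearMap.rTensor_tmul] at h
    have h' := congrArg (TensorProduct.lid k C) h
    simpa [← hα, ← hβ] using h'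
  have h2 : v + α • (1 : C) = a := by
    have h := Coalgebra.lTensor_counit_comul (R := k) a
    rw [← hyz, map_add, LinearMap.lTensor_tmul, LinearMap.lTensor_tmul] at h
    have h' := congrArg (TensorProduct.rid k C) h
    simpa [← hα, ← hβ, add_comm] using h'
  have h3 : Coalgebra.counit (R := k) a = α + β := by
    have := congrArg (Coalgebra.counit (R := k)) h1
    simpa [← hα, ← hβ] using this.symm
  have hu' : u = a - β • (1 : C) := by rw [← h1]; abel
  have hv' : v = a - α • (1 : C) := by rw [← h2]; abel
  rw [mem_primitives_iff]
  rw [map_sub, map_smul, Bialgebra.comul_one, ← hyz, hu', hv', h3,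
    Algebra.TensorProduct.one_def]
  rw [TensorProduct.tmul_sub, TensorProduct.sub_tmul, TensorProduct.sub_tmul,
    TensorProduct.tmul_sub]
  simp only [← TensorProduct.smul_tmul', TensorProduct.tmul_smul]
  module

/-- A primitive element in a bialgebra over a field has counit zero. -/
lemma counit_eq_zero_of_primitive {k C : Type*} [Field k] [Ring C] [Bialgebra k C]
    {b : C} (hb : b ∈ primitives k C) :
    Coalgebra.counit (R := k) b = 0 := by
  rw [mem_primitives_iff] at hb
  have h := Coalgebra.rTensor_counit_comul (R := k) b
  rw [hb, map_add, LinearMap.rTensor_tmul, LinearMap.rTensor_tmul] at h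
  have h' := congrArg (TensorProduct.lid k C) h
  simp only [TensorProduct.lid_tmul, Bialgebra.counit_one, one_smul] at h'
  have hz : Coalgebra.counit (R := k) b • (1 : C) = 0 := by
    have := congrArg (· - b) h'
    simpa [add_sub_cancel_right] using this
  by_contra hr
  have hone : (1 : C) = 0 := by
    calc (1 : C) = (Coalgebra.counit (R := k) b)⁻¹ • (Coalgebra.counit (R := k) b • (1 : C)) := by
          rw [smul_smul, inv_mul_cancel₀ hr, one_smul]
      _ = 0 := by rw [hz, smul_zero]
  have : (1 : k) = 0 := by
    have := congrArg (Coalgebra.counit (R := k)) hone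
    simpa using this
  exact one_ne_zero this

end Aux

/-- Let `θ : A → B` be a surjective (graded) bialgebra map between
pointed irreducible graded bialgebras over a field, with `A` generated in degree 1,
mapping the coradical filtration of `A` onto that of `B`.  If `P(A) = A(1)` then
`P(B) = B(1)`, and `B` is generated in degree 1. -/
theorem primitives_of_quotient_nichols (k : Type*) [Field k]
    (A : Type*) [Ring A] [Bialgebra k A]
    (B : Type*) [Ring B] [Bialgebra k B]
    -- gradings
    (gA : ℕ → Submodule k A) (hgA : DirectSum.IsInternal gA)
    (gB : ℕ → Submodule k B) (hgB : DirectSum.IsInternal gB)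
    -- pointed irreducible: the coradical is spanned by 1
    (hptA : coradical k A = Submodule.span k {1})
    (hptB : coradical k B = Submodule.span k {1})
    -- θ : a surjective graded bialgebra map
    (θ : A →ₐ[k] B) (hθsurj : Function.Surjective θ)
    (hθcomul : ∀ a : A, Coalgebra.comul (R := k) (θ a)
      = (TensorProduct.map θ.toLinearMap θ.toLinearMap) (Coalgebra.comul (R := k) a))
    (hθcounit : ∀ a : A, Coalgebra.counit (R := k) (θ a) = Coalgebra.counit (R := k) a)
    (hθgr : ∀ n, Submodule.map θ.toLinearMap (gA n) = gB n)
    -- θ maps the coradical filtration of A onto that of B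
    (hθfilt : ∀ n, Submodule.map θ.toLinearMap (coradFilt k A n) = coradFilt k B n)
    -- A is generated in degree 1 with P(A) = A(1)
    (hPA : primitives k A = gA 1)
    (hAgen : Algebra.adjoin k (gA 1 : Set A) = ⊤) :
    primitives k B = gB 1 ∧ Algebra.adjoin k (gB 1 : Set B) = ⊤ := by
  constructor
  · apply le_antisymm
    · -- primitives B ≤ gB 1
      intro b hb
      -- b lies in the first coradical filtration step
      have h1B : (1 : B) ∈ coradical k B := by
        rw [hptB]; exact Submodule.mem_span_singleton_self 1
      have hbfilt : b ∈ coradFilt k B 1 := by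
        show Coalgebra.comul (R := k) b ∈
          LinearMap.range (TensorProduct.map (coradical k B).subtype
              (LinearMap.id : B →ₗ[k] B)) ⊔
            LinearMap.range (TensorProduct.map (LinearMap.id : B →ₗ[k] B)
              (coradFilt k B 0).subtype)
        rw [mem_primitives_iff] at hb
        rw [hb]
        refine add_mem (Submodule.mem_sup_right ?_) (Submodule.mem_sup_left ?_)
        · exact ⟨b ⊗ₜ (⟨1, h1B⟩ : coradFilt k B 0), rfl⟩
        · exact ⟨(⟨1, h1B⟩ : coradical k B) ⊗ₜ b, rfl⟩
      rw [← hθfilt 1] at hbfilt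
      obtain ⟨a, ha, rfl⟩ := hbfilt
      have hεb : Coalgebra.counit (R := k) (θ a) = 0 := counit_eq_zero_of_primitive hb
      have hεa : Coalgebra.counit (R := k) a = 0 := by rw [← hθcounit a, hεb]
      have hprim : a - Coalgebra.counit (R := k) a • (1 : A) ∈ primitives k A :=
        coradFilt_one_sub_counit_primitive hptA ha
      rw [hεa, zero_smul, sub_zero] at hprim
      rw [← hθgr 1, ← hPA]
      exact ⟨a, hprim, rfl⟩
    · -- gB 1 ≤ primitives B
      rw [← hθgr 1, ← hPA]
      intro b hbmem
      obtain ⟨a, ha, rfl⟩ := Submodule.mem_map.mp hbmem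
      rw [mem_primitives_iff] at ha ⊢
      show Coalgebra.comul (R := k) (θ a) = _
      rw [hθcomul a, ha, map_add, TensorProduct.map_tmul, TensorProduct.map_tmul]
      show θ a ⊗ₜ θ 1 + θ 1 ⊗ₜ θ a = _
      rw [map_one]
      rfl
  · rw [← hθgr 1]
    have : (Submodule.map θ.toLinearMap (gA 1) : Set B) = θ '' (gA 1 : Set A) := rfl
    rw [this, ← AlgHom.map_adjoin, hAgen]
    simpa [Algebra.map_top] using (AlgHom.range_eq_top θ).mpr hθsurj
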